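/- If A is a c.e. set and we take V_1 = A and V_{i+1} = A_{i+1}^{V_i} (the Dekker-style subset construction) for noncomputable c.e. sets A_1 = A, A_2, ..., A_k, obtaining a chain U = V_k ⊆ ... ⊆ V_1 = V of infinite c.e. sets, then: (1) V_i ≤_T A_i for each i, and (2) for any set X with U ⊆ X ⊆ V, if i is the least index with V_i ⊆* X, then A_i ≤_T X. -/

import Mathlib

open Classical in
/-- Characteristic function of a set of naturals. -/
noncomputable def chi (A : Set ℕ) : ℕ → ℕ := fun n => if n ∈ A then 1 else 0

/-- Partial functions computable relative to an oracle `O : ℕ → ℕ`. -/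
inductive RecursiveInFn (O : ℕ → ℕ) : (ℕ →. ℕ) → Prop
  | zero : RecursiveInFn O (pure 0)
  | succ : RecursiveInFn O Nat.succ
  | left : RecursiveInFn O ↑fun n : ℕ => n.unpair.1
  | right : RecursiveInFn O ↑fun n : ℕ => n.unpair.2
  | oracle : RecursiveInFn O ↑O
  | pair {f g} : RecursiveInFn O f → RecursiveInFn O g →
      RecursiveInFn O fun n => Nat.pair <$> f n <*> g n
  | comp {f g} : RecursiveInFn O f → RecursiveInFn O g →
      RecursiveInFn O fun n => g n >>= f
  | prec {f g} : RecursiveInFn O f → RecursiveInFn O g →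
      RecursiveInFn O (Nat.unpaired fun a n =>
        n.rec (f a) fun y IH => do let i ← IH; g (Nat.pair a (Nat.pair y i)))
  | rfind {f} : RecursiveInFn O f →
      RecursiveInFn O fun a => Nat.rfind fun n => (fun m => m = 0) <$> f (Nat.pair a n)

/-- Turing reducibility between sets of naturals: `A ≤_T B`. -/
def SetTuringRed (A B : Set ℕ) : Prop := RecursiveInFn (chi B) ↑(chi A)

/-- `A` is computably enumerable. -/
def CE (A : Set ℕ) : Prop := ∃ f : ℕ →. ℕ, Nat.Partrec f ∧ ∀ n, n ∈ A ↔ (f n).Dom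

/-- `A` is c.e. relative to the oracle `O`. -/
def CEIn (O : ℕ → ℕ) (A : Set ℕ) : Prop :=
  ∃ f : ℕ →. ℕ, RecursiveInFn O f ∧ ∀ n, n ∈ A ↔ (f n).Dom

/-- A uniformly c.e. sequence of sets. -/
def UnifCE (A : ℕ → Set ℕ) : Prop :=
  ∃ f : ℕ →. ℕ, Nat.Partrec f ∧ ∀ i x, x ∈ A i ↔ (f (Nat.pair i x)).Dom

/-- The Dekker-style subset `A^W` built from enumerations `a` of `A` and `w` of `W`. -/
def DekkerOp (a w : ℕ → ℕ) : Set ℕ := {n | ∃ s, n = w s ∧ ∃ t > s, a t < w s}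

theorem RecursiveInFn.of_eq {O : ℕ → ℕ} {f g : ℕ →. ℕ} (h : RecursiveInFn O f)
    (H : ∀ n, f n = g n) : RecursiveInFn O g := (funext H : f = g) ▸ h

theorem recIn_of_partrec {O : ℕ → ℕ} {f : ℕ →. ℕ} (h : Nat.Partrec f) : RecursiveInFn O f := by
  induction h with
  | zero => exact .zero
  | succ => exact .succ
  | left => exact .left
  | right => exact .right
  | pair _ _ ih1 ih2 => exact .pair ih1 ih2
  | comp _ _ ih1 ih2 => exact .comp ih1 ih2
  | prec _ _ ih1 ih2 => exact .prec ih1 ih2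
  | rfind _ ih => exact .rfind ih

theorem recIn_of_computable {O : ℕ → ℕ} {f : ℕ → ℕ} (h : Computable f) : RecursiveInFn O ↑f :=
  recIn_of_partrec (Partrec.nat_iff.1 h)

theorem recIn_totalComp {O : ℕ → ℕ} {f g : ℕ → ℕ} (hf : RecursiveInFn O ↑f)
    (hg : RecursiveInFn O ↑g) : RecursiveInFn O ↑(fun n => f (g n)) :=
  (RecursiveInFn.comp hf hg).of_eq fun n => by
    show Part.bind (Part.some (g n)) (fun x => Part.some (f x)) = Part.some (f (g n))
    exact Part.bind_some _ _

theorem recIn_totalPair {O : ℕ → ℕ} {f g : ℕ → ℕ} (hf : RecursiveInFn O ↑f)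
    (hg : RecursiveInFn O ↑g) : RecursiveInFn O ↑(fun n => Nat.pair (f n) (g n)) :=
  (RecursiveInFn.pair hf hg).of_eq fun n => by simp [Seq.seq]

theorem recIn_id {O : ℕ → ℕ} : RecursiveInFn O ↑(fun n : ℕ => n) :=
  recIn_of_computable Computable.id

theorem recIn_query {O : ℕ → ℕ} {g : ℕ → ℕ} (hg : Computable g) :
    RecursiveInFn O ↑(fun n => O (g n)) :=
  recIn_totalComp .oracle (recIn_of_computable hg)

theorem recIn_oneQuery {O : ℕ → ℕ} {F g : ℕ → ℕ} (hF : Computable F) (hg : Computable g) :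
    RecursiveInFn O ↑(fun n => F (Nat.pair n (O (g n)))) :=
  recIn_totalComp (recIn_of_computable hF) (recIn_totalPair recIn_id (recIn_query hg))

theorem recIn_rfind_total {O : ℕ → ℕ} {f : ℕ → ℕ} (hf : RecursiveInFn O ↑f)
    (H : ∀ a, ∃ s, f (Nat.pair a s) = 0) :
    RecursiveInFn O ↑(fun a => Nat.find (H a)) :=
  (RecursiveInFn.rfind hf).of_eq fun a => by
    apply Part.eq_some_iff.2
    apply Nat.mem_rfind.2
    constructor
    · simp [Nat.find_spec (H a)]
    · intro m hm
      simp [Nat.find_min (H a) hm]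

def csum (h : ℕ → ℕ) (s : ℕ) : ℕ := Nat.rec 0 (fun t i => i + h t) s

theorem csum_succ (h : ℕ → ℕ) (s : ℕ) : csum h (s + 1) = csum h s + h s := rfl

theorem csum_eq_sum (h : ℕ → ℕ) (s : ℕ) : csum h s = ∑ t ∈ Finset.range s, h t := by
  induction s with
  | zero => rfl
  | succ s ih => rw [csum_succ, Finset.sum_range_succ, ih]

theorem csum_ne_zero_iff (h : ℕ → ℕ) (s : ℕ) : csum h s ≠ 0 ↔ ∃ t < s, h t ≠ 0 := by
  induction s with
  | zero => simp [csum]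
  | succ s ih =>
    rw [csum_succ]
    constructor
    · intro hne
      rcases Nat.eq_zero_or_pos (h s) with h0 | hpos
      · rcases ih.1 (by omega) with ⟨t, ht, hne'⟩
        exact ⟨t, by omega, hne'⟩
      · exact ⟨s, by omega, by omega⟩
    · rintro ⟨t, ht, hne⟩
      rcases Nat.lt_succ_iff_lt_or_eq.1 ht with h' | rfl
      · have := ih.2 ⟨t, h', hne⟩; omega
      · omega

-- basic computable projections
theorem comp_u1 : Computable fun n : ℕ => n.unpair.1 := Computable.fst.comp Computable.unpair
theorem comp_u2 : Computable fun n : ℕ => n.unpair.2 := Computable.snd.comp Computable.unpair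

theorem comp_decIte {α : Type} [Primcodable α] {P : α → Prop} [DecidablePred P] {f g : α → ℕ}
    (hc : Computable fun x => decide (P x)) (hf : Computable f) (hg : Computable g) :
    Computable fun x => if P x then f x else g x :=
  (Computable.cond hc hf hg).of_eq fun x => by by_cases h : P x <;> simp [h]

theorem comp_decEq {α : Type} [Primcodable α] {f g : α → ℕ} (hf : Computable f)
    (hg : Computable g) : Computable fun x => decide (f x = g x) :=
  (Primrec.eq.decide.to_comp : Computable₂ fun a b : ℕ => decide (a = b)).comp hf hg

theorem comp_decLt {α : Type} [Primcodable α] {f g : α → ℕ} (hf : Computable f)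
    (hg : Computable g) : Computable fun x => decide (f x < g x) :=
  (Primrec.nat_lt.decide.to_comp : Computable₂ fun a b : ℕ => decide (a < b)).comp hf hg

theorem comp_decLe {α : Type} [Primcodable α] {f g : α → ℕ} (hf : Computable f)
    (hg : Computable g) : Computable fun x => decide (f x ≤ g x) :=
  (Primrec.nat_le.decide.to_comp : Computable₂ fun a b : ℕ => decide (a ≤ b)).comp hf hg

theorem comp_add {α : Type} [Primcodable α] {f g : α → ℕ} (hf : Computable f)
    (hg : Computable g) : Computable fun x => f x + g x :=
  (Primrec.nat_add.to_comp : Computable₂ fun a b : ℕ => a + b).comp hf hg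

theorem computable_csum {α : Type} [Primcodable α] {p : α → ℕ → ℕ} (hp : Computable₂ p) :
    Computable fun x : α × ℕ => csum (p x.1) x.2 :=
  (Computable.nat_rec Computable.snd (Computable.const 0)
    ((comp_add (Computable.snd.comp Computable.snd)
      (hp.comp (Computable.fst.comp Computable.fst)
        (Computable.fst.comp Computable.snd))).to₂)).of_eq fun x => by
    induction x.2 with
    | zero => rfl
    | succ s ih => simpa [csum_succ] using ih

theorem part_rec_total {f g : ℕ → ℕ} :
    ∀ (a n : ℕ), (Nat.rec (Part.some (f a))
        (fun y IH => IH >>= fun i => (↑g : ℕ →. ℕ) (Nat.pair a (Nat.pair y i))) n : Part ℕ)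
      = Part.some (Nat.rec (motive := fun _ => ℕ) (f a) (fun y i => g (Nat.pair a (Nat.pair y i))) n) := by
  intro a n
  induction n with
  | zero => rfl
  | succ n ih =>
    show (Nat.rec _ _ n : Part ℕ) >>= _ = _
    rw [ih]
    simp

theorem recIn_prec_total {O : ℕ → ℕ} {f g : ℕ → ℕ} (hf : RecursiveInFn O ↑f) (hg : RecursiveInFn O ↑g) :
    RecursiveInFn O ↑(fun p : ℕ => Nat.rec (motive := fun _ => ℕ) (f p.unpair.1)
      (fun y i => g (Nat.pair p.unpair.1 (Nat.pair y i))) p.unpair.2) := by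
  refine (RecursiveInFn.prec hf hg).of_eq fun p => ?_
  simpa only [Nat.unpaired, PFun.coe_val] using part_rec_total (g := g) p.unpair.1 p.unpair.2

theorem recIn_csum_oracle {O : ℕ → ℕ} : RecursiveInFn O ↑(fun n => csum O n) := by
  have hF : Computable fun q : ℕ => q.unpair.1.unpair.2.unpair.2 + q.unpair.2 :=
    comp_add (comp_u2.comp (comp_u2.comp comp_u1)) comp_u2
  have hg0 : Computable fun q : ℕ => q.unpair.2.unpair.1 := comp_u1.comp comp_u2
  have hg : RecursiveInFn O ↑(fun x : ℕ => x.unpair.2.unpair.2 + O (x.unpair.2.unpair.1)) :=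
    (recIn_oneQuery hF hg0).of_eq fun x => by simp
  have hzero : RecursiveInFn O ↑(fun _ : ℕ => 0) := recIn_of_computable (Computable.const 0)
  have h1 := recIn_prec_total hzero hg
  have h2 : Computable fun n : ℕ => Nat.pair 0 n :=
    Primrec₂.natPair.to_comp.comp (Computable.const 0) Computable.id
  refine (recIn_totalComp h1 (recIn_of_computable h2)).of_eq fun n => ?_
  simp only [PFun.coe_val, Nat.unpair_pair, Part.some_inj]
  rfl

attribute [irreducible] csum

-- decision functions for dekker_le
def d1inner (a : ℕ → ℕ) (q s : ℕ) : ℕ :=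
  csum (fun t => if s < t then if a t < q.unpair.1 then 1 else 0 else 0) q.unpair.2

def d1indG (a w : ℕ → ℕ) (q : ℕ) : ℕ → ℕ := fun s =>
  if w s = q.unpair.1 then (if d1inner a q s = 0 then 0 else 1) else 0

def d1G (a w : ℕ → ℕ) : ℕ → ℕ := fun q => if csum (d1indG a w q) q.unpair.2 = 0 then 0 else 1

def d1f1 (a : ℕ → ℕ) : ℕ → ℕ := fun p =>
  if csum (fun t => if a t < p.unpair.1.unpair.1 then 1 else 0) p.unpair.2 = p.unpair.1.unpair.2
  then 0 else 1

theorem comp_d1f1 {a : ℕ → ℕ} (hac : Computable a) : Computable (d1f1 a) := by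
  have hp : Computable₂ fun (x t : ℕ) => if a t < x.unpair.1.unpair.1 then 1 else 0 :=
    Computable₂.mk (comp_decIte
      (comp_decLt (hac.comp Computable.snd) (comp_u1.comp (comp_u1.comp Computable.fst)))
      (Computable.const 1) (Computable.const 0))
  have h1 : Computable fun p : ℕ =>
      csum (fun t => if a t < p.unpair.1.unpair.1 then 1 else 0) p.unpair.2 :=
    ((computable_csum hp).comp (Computable.id.pair comp_u2)).of_eq fun p => rfl
  unfold d1f1
  exact comp_decIte (comp_decEq h1 (comp_u2.comp comp_u1))
    (Computable.const 0) (Computable.const 1)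

theorem comp_d1G {a w : ℕ → ℕ} (hac : Computable a) (hwc : Computable w) :
    Computable (d1G a w) := by
  have hp2 : Computable₂ fun (x : ℕ × ℕ) (t : ℕ) =>
      if x.2 < t then if a t < x.1.unpair.1 then 1 else 0 else 0 :=
    Computable₂.mk (comp_decIte
      (comp_decLt (Computable.snd.comp Computable.fst) Computable.snd)
      (comp_decIte
        (comp_decLt (hac.comp Computable.snd)
          (comp_u1.comp (Computable.fst.comp Computable.fst)))
        (Computable.const 1) (Computable.const 0))
      (Computable.const 0))
  have hinner : Computable fun x : ℕ × ℕ => d1inner a x.1 x.2 :=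
    ((computable_csum hp2).comp
      (Computable.id.pair (comp_u2.comp Computable.fst))).of_eq fun x => rfl
  have hindG : Computable₂ fun (q : ℕ) (s : ℕ) => d1indG a w q s :=
    Computable₂.mk (comp_decIte
      (comp_decEq (hwc.comp Computable.snd) (comp_u1.comp Computable.fst))
      (comp_decIte (comp_decEq hinner (Computable.const 0))
        (Computable.const 0) (Computable.const 1))
      (Computable.const 0))
  have houter : Computable fun q : ℕ => csum (d1indG a w q) q.unpair.2 :=
    ((computable_csum hindG).comp (Computable.id.pair comp_u2)).of_eq fun q => rfl
  unfold d1G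
  exact comp_decIte (comp_decEq houter (Computable.const 0))
    (Computable.const 0) (Computable.const 1)

theorem d1f1_eq_zero {a : ℕ → ℕ} {n c s : ℕ} :
    d1f1 a (Nat.pair (Nat.pair n c) s) = 0
      ↔ csum (fun t => if a t < n then 1 else 0) s = c := by
  simp only [d1f1, Nat.unpair_pair]
  by_cases h : csum (fun t => if a t < n then 1 else 0) s = c <;> simp [h]

theorem chi_pos {A : Set ℕ} {n : ℕ} (h : n ∈ A) : chi A n = 1 := by simp [chi, h]
theorem chi_neg {A : Set ℕ} {n : ℕ} (h : n ∉ A) : chi A n = 0 := by simp [chi, h]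

set_option maxHeartbeats 1000000 in
theorem dekker_le {a w : ℕ → ℕ} (hac : Computable a) (hai : Function.Injective a)
    (hwc : Computable w) : RecursiveInFn (chi (Set.range a)) ↑(chi (DekkerOp a w)) := by
  classical
  set O := chi (Set.range a) with hO
  set A := Set.range a with hA
  have hcsum_card : ∀ n, csum O n = ((Finset.range n).filter (· ∈ A)).card := by
    intro n
    rw [csum_eq_sum, Finset.card_filter]
    refine Finset.sum_congr rfl fun t _ => ?_
    by_cases h : t ∈ A
    · rw [hO, chi_pos h, if_pos h]
    · rw [hO, chi_neg h, if_neg h]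
  have hcnt_card : ∀ n s, csum (fun t => if a t < n then 1 else 0) s
      = ((Finset.range s).filter (fun t => a t < n)).card := by
    intro n s; rw [csum_eq_sum, Finset.card_filter]
  have hsub : ∀ n s, ((Finset.range s).filter (fun t => a t < n)).image a
      ⊆ (Finset.range n).filter (· ∈ A) := by
    intro n s x hx
    simp only [Finset.mem_image, Finset.mem_filter, Finset.mem_range, hA,
      Set.mem_range] at hx ⊢
    obtain ⟨t, ⟨-, hlt⟩, rfl⟩ := hx
    exact ⟨hlt, t, rfl⟩
  have hex : ∀ n, ∃ s, csum (fun t => if a t < n then 1 else 0) s = csum O n := by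
    intro n
    have hfinS : {t | a t < n}.Finite := by
      have he : {t | a t < n} = a ⁻¹' Set.Iio n := rfl
      rw [he]; exact (Set.finite_Iio n).preimage hai.injOn
    obtain ⟨b, hb⟩ := hfinS.bddAbove
    refine ⟨b + 1, ?_⟩
    have hcov : ∀ t, a t < n → t < b + 1 := fun t ht => Nat.lt_succ_of_le (hb ht)
    have himg : ((Finset.range (b+1)).filter (fun t => a t < n)).image a
        = (Finset.range n).filter (· ∈ A) := by
      refine Finset.Subset.antisymm (hsub n (b+1)) ?_
      intro x hx
      simp only [Finset.mem_image, Finset.mem_filter, Finset.mem_range, hA,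
        Set.mem_range] at hx ⊢
      obtain ⟨hxn, t, rfl⟩ := hx
      exact ⟨t, ⟨hcov t hxn, hxn⟩, rfl⟩
    rw [hcnt_card, hcsum_card, ← himg, Finset.card_image_of_injective _ hai]
  have hkey : ∀ n T, csum (fun t => if a t < n then 1 else 0) T = csum O n →
      ∀ t, a t < n → t < T := by
    intro n T hT t ht
    have hcard : (((Finset.range T).filter (fun t => a t < n)).image a).card
        = ((Finset.range n).filter (· ∈ A)).card := by
      rw [Finset.card_image_of_injective _ hai, ← hcnt_card, hT, hcsum_card]
    have heq := Finset.eq_of_subset_of_card_le (hsub n T) (le_of_eq hcard.symm)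
    have hmem : a t ∈ (Finset.range n).filter (· ∈ A) := by
      simp only [Finset.mem_filter, Finset.mem_range, hA, Set.mem_range]
      exact ⟨ht, t, rfl⟩
    rw [← heq] at hmem
    obtain ⟨t', ht', heq'⟩ := Finset.mem_image.1 hmem
    obtain rfl := hai heq'
    exact Finset.mem_range.1 (Finset.mem_filter.1 ht').1
  -- totality of the search
  have H : ∀ n, ∃ s, d1f1 a (Nat.pair (Nat.pair n (csum O n)) s) = 0 := fun n =>
    (hex n).imp fun _ hs => d1f1_eq_zero.2 hs
  -- the oracle computation
  have hq : RecursiveInFn O ↑(fun n => Nat.pair n (csum O n)) :=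
    recIn_totalPair recIn_id recIn_csum_oracle
  have hrf := RecursiveInFn.rfind (O := O) (recIn_of_computable (comp_d1f1 hac))
  have hT : RecursiveInFn O ↑(fun n => Nat.find (H n)) := by
    refine (RecursiveInFn.comp hrf hq).of_eq fun n => ?_
    have hb : (↑(fun n => Nat.pair n (csum O n)) : ℕ →. ℕ) n
        = Part.some (Nat.pair n (csum O n)) := rfl
    rw [hb, Part.bind_eq_bind, Part.bind_some]
    apply Part.eq_some_iff.2
    apply Nat.mem_rfind.2
    constructor
    · simp [Nat.find_spec (H n)]
    · intro m hm
      simp [Nat.find_min (H n) hm]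
  have hGfin := recIn_totalComp (recIn_of_computable (comp_d1G hac hwc))
    (recIn_totalPair recIn_id hT)
  refine hGfin.of_eq fun n => ?_
  simp only [PFun.coe_val, Part.some_inj]
  -- correctness
  have hcnt : csum (fun t => if a t < n then 1 else 0) (Nat.find (H n)) = csum O n :=
    d1f1_eq_zero.1 (Nat.find_spec (H n))
  generalize hTg : Nat.find (H n) = T at hcnt ⊢
  have hcov : ∀ t, a t < n → t < T := hkey n T hcnt
  have hiff : csum (d1indG a w (Nat.pair n T)) T ≠ 0 ↔ n ∈ DekkerOp a w := by
    rw [csum_ne_zero_iff]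
    constructor
    · rintro ⟨s, hsT, hne⟩
      simp only [d1indG, Nat.unpair_pair] at hne
      by_cases hws : w s = n
      · rw [if_pos hws] at hne
        by_cases hin : d1inner a (Nat.pair n T) s = 0
        · rw [if_pos hin] at hne; exact absurd rfl hne
        · have := (csum_ne_zero_iff _ _).1 (by simpa [d1inner, Nat.unpair_pair] using hin)
          obtain ⟨t, htT, hind⟩ := this
          by_cases hst : s < t
          · rw [if_pos hst] at hind
            by_cases hat : a t < n
            · exact ⟨s, hws.symm, t, hst, by rwa [hws]⟩
            · rw [if_neg hat] at hind; exact absurd rfl hind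
          · rw [if_neg hst] at hind; exact absurd rfl hind
      · rw [if_neg hws] at hne; exact absurd rfl hne
    · rintro ⟨s, hns, t, hst, hat⟩
      rw [← hns] at hat
      have htT : t < T := hcov t hat
      refine ⟨s, lt_trans hst htT, ?_⟩
      simp only [d1indG, Nat.unpair_pair]
      rw [if_pos hns.symm]
      have hin : d1inner a (Nat.pair n T) s ≠ 0 := by
        simp only [d1inner, Nat.unpair_pair]
        rw [csum_ne_zero_iff]
        exact ⟨t, htT, by rw [if_pos hst, if_pos hat]; exact one_ne_zero⟩
      rw [if_neg hin]
      exact one_ne_zero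
  simp only [d1G, Nat.unpair_pair]
  by_cases hmem : n ∈ DekkerOp a w
  · rw [if_neg (hiff.2 hmem), chi_pos hmem]
  · rw [if_pos (by by_contra hc; exact hmem (hiff.1 hc)), chi_neg hmem]

theorem chi_zero_iff {A : Set ℕ} {n : ℕ} : chi A n = 0 ↔ n ∉ A := by
  by_cases h : n ∈ A <;> simp [chi, h]

def d2F (w : ℕ → ℕ) (s0 : ℕ) : ℕ → ℕ := fun q =>
  if s0 ≤ q.unpair.1.unpair.2 then
    if q.unpair.1.unpair.1 < w q.unpair.1.unpair.2 then
      if q.unpair.2 = 0 then 0 else 1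
    else 1
  else 1

theorem comp_d2F {w : ℕ → ℕ} (hwc : Computable w) (s0 : ℕ) : Computable (d2F w s0) := by
  unfold d2F
  exact comp_decIte (comp_decLe (Computable.const s0) (comp_u2.comp comp_u1))
    (comp_decIte (comp_decLt (comp_u1.comp comp_u1) (hwc.comp (comp_u2.comp comp_u1)))
      (comp_decIte (comp_decEq comp_u2 (Computable.const 0))
        (Computable.const 0) (Computable.const 1))
      (Computable.const 1))
    (Computable.const 1)

theorem d2F_eq_zero {w : ℕ → ℕ} {s0 n s x : ℕ} :
    d2F w s0 (Nat.pair (Nat.pair n s) x) = 0 ↔ s0 ≤ s ∧ n < w s ∧ x = 0 := by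
  simp only [d2F, Nat.unpair_pair]
  by_cases h1 : s0 ≤ s <;> by_cases h2 : n < w s <;> by_cases h3 : x = 0 <;>
    simp [h1, h2, h3]

def d2F3 (a : ℕ → ℕ) : ℕ → ℕ := fun q =>
  if csum (fun t => if a t = q.unpair.1 then 1 else 0) (q.unpair.2 + 1) = 0 then 0 else 1

theorem comp_d2F3 {a : ℕ → ℕ} (hac : Computable a) : Computable (d2F3 a) := by
  have hp : Computable₂ fun (x t : ℕ) => if a t = x.unpair.1 then 1 else 0 :=
    Computable₂.mk (comp_decIte
      (comp_decEq (hac.comp Computable.snd) (comp_u1.comp Computable.fst))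
      (Computable.const 1) (Computable.const 0))
  have h1 : Computable fun q : ℕ =>
      csum (fun t => if a t = q.unpair.1 then 1 else 0) (q.unpair.2 + 1) :=
    ((computable_csum hp).comp
      (Computable.id.pair (Primrec.succ.to_comp.comp comp_u2))).of_eq fun q => rfl
  unfold d2F3
  exact comp_decIte (comp_decEq h1 (Computable.const 0))
    (Computable.const 0) (Computable.const 1)

theorem dekker_reduce {a w : ℕ → ℕ} {X : Set ℕ} (hac : Computable a) (hwc : Computable w)
    (hwi : Function.Injective w) (hfin : (DekkerOp a w \ X).Finite)
    (hinf : (Set.range w \ X).Infinite) : RecursiveInFn (chi X) ↑(chi (Set.range a)) := by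
  classical
  set O := chi X with hO
  have hIfin : {s | w s ∈ DekkerOp a w \ X}.Finite := hfin.preimage hwi.injOn
  obtain ⟨b, hb⟩ := hIfin.bddAbove
  have hf2 : RecursiveInFn O ↑(fun p => d2F w (b+1) (Nat.pair p (O (w p.unpair.2)))) :=
    recIn_oneQuery (comp_d2F hwc (b+1)) (hwc.comp comp_u2)
  have H : ∀ n, ∃ s,
      (fun p => d2F w (b+1) (Nat.pair p (O (w p.unpair.2)))) (Nat.pair n s) = 0 := by
    intro n
    have hinfS : {s | w s ∉ X}.Infinite := by
      intro hfin'
      apply hinf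
      have hsub : Set.range w \ X ⊆ w '' {s | w s ∉ X} := by
        rintro x ⟨⟨s, rfl⟩, hx⟩; exact ⟨s, hx, rfl⟩
      exact Set.Finite.subset (hfin'.image w) hsub
    have hfin1 : {s | w s ≤ n}.Finite := by
      have he : {s | w s ≤ n} = w ⁻¹' Set.Iic n := rfl
      rw [he]; exact (Set.finite_Iic n).preimage hwi.injOn
    obtain ⟨s, hs⟩ := ((hinfS.diff hfin1).diff (Set.finite_Iio (b+1))).nonempty
    obtain ⟨⟨hsX, hsn⟩, hss0⟩ := hs
    simp only [Set.mem_setOf_eq] at hsX hsn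
    simp only [Set.mem_Iio] at hss0
    refine ⟨s, ?_⟩
    show d2F w (b+1) (Nat.pair (Nat.pair n s) (O (w (Nat.pair n s).unpair.2))) = 0
    rw [Nat.unpair_pair]
    exact d2F_eq_zero.2 ⟨by omega, by omega, by rw [hO]; exact chi_zero_iff.2 hsX⟩
  have hT := recIn_rfind_total hf2 H
  refine (recIn_totalComp (recIn_of_computable (comp_d2F3 hac))
    (recIn_totalPair recIn_id hT)).of_eq fun n => ?_
  simp only [PFun.coe_val, Part.some_inj]
  obtain ⟨h1, h2, h3⟩ := d2F_eq_zero.1 (Nat.find_spec (H n))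
  rw [Nat.unpair_pair] at h3
  generalize hgen : Nat.find (H n) = s at h1 h2 h3 ⊢
  have hwX : w s ∉ X := by rw [hO] at h3; exact chi_zero_iff.1 h3
  have hwD : w s ∉ DekkerOp a w := by
    intro hD
    have hmem : s ∈ {s | w s ∈ DekkerOp a w \ X} := ⟨hD, hwX⟩
    have := hb hmem
    omega
  have hAiff : n ∈ Set.range a ↔ ∃ t, t < s + 1 ∧ a t = n := by
    constructor
    · rintro ⟨t, rfl⟩
      refine ⟨t, ?_, rfl⟩
      by_contra hts
      exact hwD ⟨s, rfl, t, by omega, h2⟩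
    · rintro ⟨t, -, rfl⟩
      exact ⟨t, rfl⟩
  simp only [d2F3, Nat.unpair_pair]
  by_cases hmem : n ∈ Set.range a
  · have hne : csum (fun t => if a t = n then 1 else 0) (s + 1) ≠ 0 := by
      rw [csum_ne_zero_iff]
      obtain ⟨t, hts, hat⟩ := hAiff.1 hmem
      exact ⟨t, hts, by rw [if_pos hat]; exact one_ne_zero⟩
    rw [if_neg hne, chi_pos hmem]
  · have hz : csum (fun t => if a t = n then 1 else 0) (s + 1) = 0 := by
      by_contra hne
      obtain ⟨t, hts, hat⟩ := (csum_ne_zero_iff _ _).1 hne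
      by_cases h : a t = n
      · exact hmem (hAiff.2 ⟨t, hts, h⟩)
      · rw [if_neg h] at hat; exact hat rfl
    rw [if_pos hz, chi_neg hmem]

theorem comp_decMemList : ∀ l : List ℕ, Computable fun n : ℕ => decide (n ∈ l)
  | [] => (Computable.const false).of_eq fun n => by simp
  | x :: xs => by
    have h1 : Computable fun n : ℕ => (decide (n = x) || decide (n ∈ xs)) := by
      have hd := comp_decMemList xs
      have he : Computable fun n : ℕ => decide (n = x) :=
        comp_decEq Computable.id (Computable.const x)
      exact (Computable.cond he (Computable.const true) hd).of_eq fun n => by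
        by_cases h : n = x <;> simp [h]
    exact h1.of_eq fun n => by
      by_cases h : n = x <;> by_cases h2 : n ∈ xs <;> simp [h, h2]

theorem finite_diff_reduce {A X : Set ℕ} (hXA : X ⊆ A) (hfin : (A \ X).Finite) :
    RecursiveInFn (chi X) ↑(chi A) := by
  classical
  set l := hfin.toFinset.toList with hl
  have hmem : ∀ n, n ∈ l ↔ n ∈ A \ X := fun n => by
    rw [hl, Finset.mem_toList, Set.Finite.mem_toFinset]
  have hF : Computable fun q : ℕ => if q.unpair.1 ∈ l then 1 else q.unpair.2 :=
    comp_decIte ((comp_decMemList l).comp comp_u1) (Computable.const 1) comp_u2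
  refine (recIn_oneQuery hF Computable.id).of_eq fun n => ?_
  simp only [PFun.coe_val, Part.some_inj, Nat.unpair_pair, id_eq]
  by_cases hA : n ∈ A
  · rw [chi_pos hA]
    by_cases hX : n ∈ X
    · by_cases hL : n ∈ l
      · rw [if_pos hL]
      · rw [if_neg hL, chi_pos hX]
    · rw [if_pos ((hmem n).2 ⟨hA, hX⟩)]
  · have hX : n ∉ X := fun h => hA (hXA h)
    have hL : n ∉ l := fun h => hA ((hmem n).1 h).1
    rw [chi_neg hA, if_neg hL, chi_neg hX]

theorem stmt15 (k : ℕ) (hk : 1 ≤ k) (a v : ℕ → ℕ → ℕ)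
    (hac : ∀ i, 1 ≤ i → i ≤ k → Computable (a i))
    (hai : ∀ i, 1 ≤ i → i ≤ k → Function.Injective (a i))
    (hanc : ∀ i, 1 ≤ i → i ≤ k → ¬ComputablePred (· ∈ Set.range (a i)))
    (hvc : ∀ i, 1 ≤ i → i ≤ k → Computable (v i))
    (hvi : ∀ i, 1 ≤ i → i ≤ k → Function.Injective (v i))
    (hv1 : Set.range (v 1) = Set.range (a 1))
    (hstep : ∀ i, 1 ≤ i → i < k →
      Set.range (v (i + 1)) = DekkerOp (a (i + 1)) (v i)) :
    (∀ i, 1 ≤ i → i ≤ k → SetTuringRed (Set.range (v i)) (Set.range (a i))) ∧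
    (∀ X : Set ℕ, Set.range (v k) ⊆ X → X ⊆ Set.range (v 1) →
      ∀ i, 1 ≤ i → i ≤ k → (Set.range (v i) \ X).Finite →
        (∀ j, 1 ≤ j → j < i → ¬(Set.range (v j) \ X).Finite) →
        SetTuringRed (Set.range (a i)) X) := by
  constructor
  · intro i h1 hik
    match i, h1, hik with
    | 1, _, hik =>
      show RecursiveInFn (chi (Set.range (a 1))) ↑(chi (Set.range (v 1)))
      rw [hv1]
      exact RecursiveInFn.oracle
    | (j+2), _, hik =>
      show RecursiveInFn (chi (Set.range (a (j+2)))) ↑(chi (Set.range (v (j+2))))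
      have hst := hstep (j+1) (by omega) (by omega)
      rw [show Set.range (v (j+2)) = DekkerOp (a (j+2)) (v (j+1)) from hst]
      exact dekker_le (hac (j+2) (by omega) hik) (hai (j+2) (by omega) hik)
        (hvc (j+1) (by omega) (by omega))
  · intro X hUX hXV i h1 hik hfin hmin
    match i, h1, hik, hfin, hmin with
    | 1, _, hik, hfin, hmin =>
      show RecursiveInFn (chi X) ↑(chi (Set.range (a 1)))
      rw [← hv1]
      exact finite_diff_reduce hXV hfin
    | (j+2), _, hik, hfin, hmin =>
      show RecursiveInFn (chi X) ↑(chi (Set.range (a (j+2))))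
      have hst := hstep (j+1) (by omega) (by omega)
      have hinf : (Set.range (v (j+1)) \ X).Infinite := hmin (j+1) (by omega) (by omega)
      refine dekker_reduce (hac (j+2) (by omega) hik)
        (hvc (j+1) (by omega) (by omega)) (hvi (j+1) (by omega) (by omega)) ?_ hinf
      rw [← hst]
      exact hfin
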